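/- Green function ratio formula: assume α > 1, let m be the unique positive real with Σᵣ k⁺(r)/(m + k⁻(r)) = 1, and set σ̄ᵢ = k⁺(i)/(m + k⁻(i)). Then G(x,y) < ∞ for all x, y ∈ 𝒯, and for every x ∈ 𝒯 and all i, j ∈ Fin d, G(o, x·j)·σ̄ᵢ·(k⁻(i) + K) = G(o, x·i)·σ̄ⱼ·(k⁻(j) + K); equivalently, G(o, x·j)/G(o, x·i) = σ̄ⱼ·(k⁻(j) + K)/(σ̄ᵢ·(k⁻(i) + K)). -/

import Mathlib

open scoped ENNReal
open Filter

lemma listProd_mul {ι : Type*} (f g : ι → ℝ) :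
    ∀ l : List ι, (l.map fun i => f i * g i).prod = (l.map f).prod * (l.map g).prod := by
  intro l; induction l with
  | nil => simp
  | cons a t ih => simp [ih]; ring

lemma ofReal_listProd {ι : Type*} (f : ι → ℝ) (hf : ∀ i, 0 ≤ f i) :
    ∀ l : List ι, ENNReal.ofReal ((l.map f).prod) = (l.map fun i => ENNReal.ofReal (f i)).prod := by
  intro l; induction l with
  | nil => simp
  | cons a t ih => simp [ENNReal.ofReal_mul (hf a), ih]

lemma listProd_nonneg {ι : Type*} (f : ι → ℝ) (hf : ∀ i, 0 ≤ f i) :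
    ∀ l : List ι, 0 ≤ (l.map f).prod := by
  intro l; induction l with
  | nil => simp
  | cons a t ih => simpa using mul_nonneg (hf a) ih

lemma listProd_pos {ι : Type*} (f : ι → ℝ) (hf : ∀ i, 0 < f i) :
    ∀ l : List ι, 0 < (l.map f).prod := by
  intro l; induction l with
  | nil => simp
  | cons a t ih => simpa using mul_pos (hf a) ih

lemma listProd_le_one {ι : Type*} (f : ι → ℝ) (hf0 : ∀ i, 0 ≤ f i) (hf1 : ∀ i, f i ≤ 1) :
    ∀ l : List ι, (l.map f).prod ≤ 1 := by
  intro l; induction l with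
  | nil => simp
  | cons a t ih =>
      simp only [List.map_cons, List.prod_cons]
      calc f a * (t.map f).prod ≤ 1 * 1 :=
        mul_le_mul (hf1 a) ih (listProd_nonneg f hf0 t) zero_le_one
      _ = 1 := by ring

/-- equivalence between `α × {length = n}` and `{length = n+1}` via cons -/
def consEquiv (α : Type*) (n : ℕ) :
    α × {l : List α // l.length = n} ≃ {l : List α // l.length = n + 1} where
  toFun p := ⟨p.1 :: p.2.1, by simp [p.2.2]⟩
  invFun l := ⟨l.1.head (by
      intro h
      have := l.2; rw [h] at this; simp at this),
    ⟨l.1.tail, by have := l.2; simp [List.length_tail, this]⟩⟩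
  left_inv := by rintro ⟨a, ⟨t, ht⟩⟩; simp
  right_inv := by
    rintro ⟨l, hl⟩
    simp only [Subtype.mk.injEq]
    exact List.cons_head_tail _

lemma tsum_subtype_len {α : Type*} [Fintype α] (c : α → ℝ≥0∞) (n : ℕ) :
    ∑' l : {l : List α // l.length = n}, ((l : List α).map c).prod = (∑ i, c i) ^ n := by
  induction n with
  | zero =>
      rw [tsum_eq_single (⟨[], rfl⟩ : {l : List α // l.length = 0})]
      · simp
      · rintro ⟨l, hl⟩ hb
        exact absurd (Subtype.ext (List.length_eq_zero_iff.mp hl)) hb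
  | succ n ih =>
      rw [← Equiv.tsum_eq (consEquiv α n)]
      have : ∀ p : α × {l : List α // l.length = n},
          (((consEquiv α n p : {l : List α // l.length = n+1}) : List α).map c).prod
            = c p.1 * ((p.2 : List α).map c).prod := by
        rintro ⟨a, ⟨t, ht⟩⟩; simp [consEquiv]
      simp_rw [this]
      rw [ENNReal.tsum_prod']
      simp_rw [ENNReal.tsum_mul_left]
      rw [ih, ENNReal.tsum_mul_right, tsum_fintype]
      ring

lemma tsum_list_prod {α : Type*} [Fintype α] (c : α → ℝ≥0∞) :
    ∑' l : List α, (l.map c).prod = ∑' n : ℕ, (∑ i, c i) ^ n := by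
  rw [← Equiv.tsum_eq (Equiv.sigmaFiberEquiv (List.length : List α → ℕ))]
  rw [ENNReal.tsum_sigma']
  exact tsum_congr fun n => tsum_subtype_len c n

set_option maxHeartbeats 2000000 in
/-- Green function ratio formula: assume `α = Σ i, k⁺ i / k⁻ i > 1`, let
`m` be the unique positive real with `Σ r, k⁺ r / (m + k⁻ r) = 1`, and set
`σ̄ i = k⁺ i / (m + k⁻ i)`.  Then `G(x,y) < ∞` for all `x, y`, and for every state `x` and
all monomer types `i, j`:
`G(o, x·j) · σ̄ i · (k⁻ i + K) = G(o, x·i) · σ̄ j · (k⁻ j + K)`, i.e.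
`G(o, x·j)/G(o, x·i) = σ̄ j (k⁻ j + K) / (σ̄ i (k⁻ i + K))`. -/
theorem stmt11 (d : ℕ) (hd : 1 ≤ d) (kp km : Fin d → ℝ)
    (hkp : ∀ i, 0 < kp i) (hkm : ∀ i, 0 < km i)
    (K : ℝ) (hK : K = ∑ i : Fin d, kp i)
    (hα : 1 < ∑ i : Fin d, kp i / km i)
    (m : ℝ) (hm : 0 < m) (hmeq : ∑ r : Fin d, kp r / (m + km r) = 1)
    (σ : Fin d → ℝ) (hσ : ∀ i, σ i = kp i / (m + km i))
    (p : List (Fin d) → List (Fin d) → ℝ)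
    (hp_root : ∀ i : Fin d, p [] [i] = kp i / K)
    (hp_up : ∀ (x : List (Fin d)) (i j : Fin d),
      p (x ++ [i]) (x ++ [i] ++ [j]) = kp j / (km i + K))
    (hp_down : ∀ (x : List (Fin d)) (i : Fin d), p (x ++ [i]) x = km i / (km i + K))
    (hp_zero : ∀ x y : List (Fin d),
      (¬ ∃ i : Fin d, y = x ++ [i]) → (¬ ∃ i : Fin d, x = y ++ [i]) → p x y = 0)
    (pn : ℕ → List (Fin d) → List (Fin d) → ℝ)
    (hpn0 : ∀ x y : List (Fin d), pn 0 x y = if x = y then 1 else 0)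
    (hpns : ∀ (n : ℕ) (x y : List (Fin d)),
      pn (n + 1) x y = ∑' z : List (Fin d), pn n x z * p z y) :
    (∀ x y : List (Fin d), (∑' n : ℕ, ENNReal.ofReal (pn n x y)) < ⊤) ∧
    (∀ (x : List (Fin d)) (i j : Fin d),
      (∑' n : ℕ, ENNReal.ofReal (pn n [] (x ++ [j]))) * ENNReal.ofReal (σ i * (km i + K))
        = (∑' n : ℕ, ENNReal.ofReal (pn n [] (x ++ [i])))
            * ENNReal.ofReal (σ j * (km j + K))) := by
  classical
  -- ## basic positivity
  have hne : Nonempty (Fin d) := ⟨⟨0, hd⟩⟩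
  have hK0 : 0 < K := by
    rw [hK]; exact Finset.sum_pos (fun i _ => hkp i) Finset.univ_nonempty
  have hKi : ∀ i, 0 < km i + K := fun i => add_pos (hkm i) hK0
  set m' : ℝ := m / 2 with hm'def
  have hm'0 : 0 < m' := by positivity
  have hm'm : m' < m := by simp [hm'def]; linarith
  have hm'k : ∀ i, 0 < m' + km i := fun i => add_pos hm'0 (hkm i)
  have hmk : ∀ i, 0 < m + km i := fun i => add_pos hm (hkm i)
  set s' : ℝ := ∑ r, kp r / (m' + km r) with hs'def
  have hs'1 : 1 < s' := by
    rw [← hmeq, hs'def]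
    refine Finset.sum_lt_sum_of_nonempty Finset.univ_nonempty fun i _ => ?_
    exact div_lt_div_of_pos_left (hkp i) (hm'k i) (by linarith)
  have hs'K : m' * s' < K := by
    have h1 : s' < K / m' := by
      rw [hs'def, hK, Finset.sum_div]
      refine Finset.sum_lt_sum_of_nonempty Finset.univ_nonempty fun i _ => ?_
      exact div_lt_div_of_pos_left (hkp i) hm'0 (by linarith [hkm i])
    have := (lt_div_iff₀ hm'0).mp h1
    linarith
  set β : Fin d → ℝ := fun i => km i / (m' + km i) with hβdef
  have hβ0 : ∀ i, 0 < β i := fun i => div_pos (hkm i) (hm'k i)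
  have hβ1 : ∀ i, β i < 1 := fun i => (div_lt_one (hm'k i)).mpr (by linarith)
  have hβm : ∀ i, β i * (m' + km i) = km i := fun i => div_mul_cancel₀ _ (hm'k i).ne'
  have hβkp : ∑ i, kp i * β i = K - m' * s' := by
    rw [hK, hs'def, Finset.mul_sum, ← Finset.sum_sub_distrib]
    refine Finset.sum_congr rfl fun i _ => ?_
    have h := (hm'k i).ne'
    rw [hβdef]
    field_simp
    ring
  have hσ0 : ∀ i, 0 < σ i := fun i => (hσ i) ▸ div_pos (hkp i) (hmk i)
  have hσsum : ∑ i, σ i = 1 := by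
    rw [Finset.sum_congr rfl fun i _ => hσ i]; exact hmeq
  have hσm : ∀ i, σ i * (m + km i) = kp i := fun i => by
    rw [hσ i]; exact div_mul_cancel₀ _ (hmk i).ne'
  have hσkm : ∑ i, σ i * km i = K - m := by
    have h1 : ∀ i : Fin d, σ i * km i = kp i - m * σ i := fun i => by
      rw [← hσm i]; ring
    rw [Finset.sum_congr rfl fun i _ => h1 i, Finset.sum_sub_distrib, ← Finset.mul_sum,
      hσsum, ← hK]
    ring
  have hmK : m ≤ K := by
    have h1 : (1:ℝ) ≤ K / m := by
      rw [← hmeq, hK, Finset.sum_div]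
      refine Finset.sum_le_sum fun i _ => ?_
      exact div_le_div_of_nonneg_left (hkp i).le hm (by linarith [hkm i])
    have := (le_div_iff₀ hm).mp h1
    linarith
  set B : ℝ := ∑ i, km i with hBdef
  have hkmB : ∀ i, km i ≤ B := fun i =>
    Finset.single_le_sum (fun j _ => (hkm j).le) (Finset.mem_univ i)
  have hKB : 0 < K + B := by
    have : 0 < B := Finset.sum_pos (fun i _ => hkm i) Finset.univ_nonempty
    linarith
  set ε : ℝ := m' * (s' - 1) / (K + B) with hεdef
  have hε0 : 0 < ε := div_pos (mul_pos hm'0 (by linarith)) hKB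
  have hεi : ∀ i, ε * (km i + K) ≤ m' * (s' - 1) := by
    intro i
    have h1 : ε * (K + B) = m' * (s' - 1) := div_mul_cancel₀ _ hKB.ne'
    nlinarith [hkmB i, hε0]
  have hεr : ε ≤ m' * s' / K := by
    rw [hεdef]
    apply div_le_div₀ (by positivity) _ hK0 (by linarith [hkmB ⟨0, hd⟩, hkm (⟨0, hd⟩ : Fin d), hKB])
    nlinarith [hm'0]
  have hε1 : ε < 1 := lt_of_le_of_lt hεr ((div_lt_one hK0).mpr hs'K)
  have h1ε : 0 < 1 - ε := by linarith
  clear_value m' s' β B ε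
  set lam : ℝ≥0∞ := ENNReal.ofReal (1 - ε) with hlamdef
  have hlam1 : lam < 1 := by
    rw [hlamdef]; exact ENNReal.ofReal_lt_one.mpr (by linarith)
  have hlamtop : lam ≠ ⊤ := ENNReal.ofReal_ne_top
  clear_value lam
  -- ## weight function
  set wt : List (Fin d) → ℝ := fun y => (y.map β).prod with hwtdef
  have hwt0 : ∀ y, 0 < wt y := fun y => listProd_pos β hβ0 y
  have hwt1 : ∀ y, wt y ≤ 1 := fun y => listProd_le_one β (fun i => (hβ0 i).le) (fun i => (hβ1 i).le) y
  have hwtconcat : ∀ (w : List (Fin d)) (i : Fin d), wt (w ++ [i]) = wt w * β i := by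
    intro w i; simp [hwtdef]
  set Wt : List (Fin d) → ℝ≥0∞ := fun y => ENNReal.ofReal (wt y) with hWtdef
  have hWt0 : ∀ y, Wt y ≠ 0 := fun y => by
    simp [hWtdef, ENNReal.ofReal_eq_zero, not_le, hwt0 y]
  have hWtt : ∀ y, Wt y ≠ ⊤ := fun y => ENNReal.ofReal_ne_top
  have hWt1 : ∀ y, Wt y ≤ 1 := fun y => ENNReal.ofReal_le_one.mpr (hwt1 y)
  clear_value wt Wt
  -- ## transition kernel facts
  have hp_nonneg : ∀ z y, 0 ≤ p z y := by
    intro z y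
    by_cases h1 : ∃ i, y = z ++ [i]
    · obtain ⟨i, rfl⟩ := h1
      rcases List.eq_nil_or_concat z with rfl | ⟨w, r, rfl⟩
      · rw [show ([] : List (Fin d)) ++ [i] = [i] from rfl, hp_root]
        exact (div_pos (hkp i) hK0).le
      · rw [List.concat_eq_append, hp_up]
        exact (div_pos (hkp i) (hKi r)).le
    · by_cases h2 : ∃ i, z = y ++ [i]
      · obtain ⟨i, rfl⟩ := h2
        rw [hp_down]
        exact (div_pos (hkm i) (hKi i)).le
      · rw [hp_zero z y h1 h2]
  set S : List (Fin d) → Finset (List (Fin d)) :=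
    fun y => (Finset.univ.image fun i : Fin d => y ++ [i]) ∪
      (if y = [] then ∅ else {y.dropLast}) with hSdef
  have hpS : ∀ z y, z ∉ S y → p z y = 0 := by
    intro z y hz
    apply hp_zero
    · rintro ⟨i, rfl⟩
      apply hz
      rw [hSdef]
      apply Finset.mem_union_right
      rw [if_neg (by simp)]
      simp
    · rintro ⟨i, rfl⟩
      apply hz
      rw [hSdef]
      exact Finset.mem_union_left _ (Finset.mem_image.2 ⟨i, Finset.mem_univ i, rfl⟩)
  have hpT : ∀ z y, y ∉ S z → p z y = 0 := by
    intro z y hy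
    apply hp_zero
    · rintro ⟨i, rfl⟩
      apply hy
      rw [hSdef]
      exact Finset.mem_union_left _ (Finset.mem_image.2 ⟨i, Finset.mem_univ i, rfl⟩)
    · rintro ⟨i, rfl⟩
      apply hy
      rw [hSdef]
      apply Finset.mem_union_right
      rw [if_neg (by simp)]
      simp
  set P : List (Fin d) → List (Fin d) → ℝ≥0∞ := fun z y => ENNReal.ofReal (p z y) with hPdef
  set Pn : ℕ → List (Fin d) → List (Fin d) → ℝ≥0∞ :=
    fun n x y => ENNReal.ofReal (pn n x y) with hPndef
  have hpn_nonneg : ∀ n x y, 0 ≤ pn n x y := by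
    intro n
    induction n with
    | zero => intro x y; rw [hpn0]; split <;> norm_num
    | succ n ih =>
        intro x y; rw [hpns]
        exact tsum_nonneg fun z => mul_nonneg (ih x z) (hp_nonneg z y)
  have hPn_rec : ∀ n x y, Pn (n+1) x y = ∑' z, Pn n x z * P z y := by
    intro n x y
    have hsum : Summable fun z => pn n x z * p z y :=
      summable_of_ne_finset_zero (s := S y) fun z hz => by rw [hpS z y hz, mul_zero]
    simp only [hPndef, hPdef]
    rw [hpns, ENNReal.ofReal_tsum_of_nonneg
      (fun z => mul_nonneg (hpn_nonneg n x z) (hp_nonneg z y)) hsum]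
    exact tsum_congr fun z => ENNReal.ofReal_mul (hpn_nonneg n x z)
  have hPn0 : ∀ x y, Pn 0 x y = if x = y then 1 else 0 := by
    intro x y; rw [hPndef]; simp only [hpn0]
    split <;> simp
  clear_value P Pn S
  -- ## Lyapunov / out-sum estimate
  have hSnil : S ([] : List (Fin d)) = Finset.univ.image fun i : Fin d => [] ++ [i] := by
    simp [hSdef]
  have hSconcat : ∀ (w : List (Fin d)) (i : Fin d),
      S (w ++ [i]) = (Finset.univ.image fun j : Fin d => (w ++ [i]) ++ [j]) ∪ {w} := by
    intro w i
    simp only [hSdef]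
    congr 1
    rw [if_neg (by simp), List.dropLast_concat]
  have hdisj : ∀ (z w : List (Fin d)), w.length < z.length →
      Disjoint (Finset.univ.image fun j : Fin d => z ++ [j]) ({w} : Finset (List (Fin d))) := by
    intro z w hlen
    rw [Finset.disjoint_right]
    intro a ha hmem
    rw [Finset.mem_singleton] at ha
    rw [Finset.mem_image] at hmem
    obtain ⟨j, _, hj⟩ := hmem
    rw [ha] at hj
    have := congrArg List.length hj
    simp at this
    omega
  have hinj : ∀ z : List (Fin d), ∀ a ∈ (Finset.univ : Finset (Fin d)),
      ∀ b ∈ (Finset.univ : Finset (Fin d)), z ++ [a] = z ++ [b] → a = b := by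
    intro z a _ b _ hab
    simpa using hab
  have hout : ∀ z, (∑' y, Wt y * P z y) ≤ lam * Wt z := by
    intro z
    have hvan : ∀ y ∉ S z, Wt y * P z y = 0 := fun y hy => by
      simp [hPdef, hpT z y hy]
    rw [tsum_eq_sum hvan]
    rcases List.eq_nil_or_concat z with rfl | ⟨w, i, rfl⟩
    · rw [hSnil, Finset.sum_image (hinj [])]
      have hterm : ∀ j : Fin d, Wt ([] ++ [j]) * P [] ([] ++ [j])
          = ENNReal.ofReal (β j * (kp j / K)) := by
        intro j
        have hwj : wt [j] = β j := by simp [hwtdef]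
        simp only [List.nil_append, hWtdef, hPdef, hp_root j, hwj]
        rw [← ENNReal.ofReal_mul (hβ0 j).le]
      rw [Finset.sum_congr rfl fun j _ => hterm j,
        ← ENNReal.ofReal_sum_of_nonneg fun j _ =>
          mul_nonneg (hβ0 j).le (div_pos (hkp j) hK0).le]
      have hW : Wt ([] : List (Fin d)) = 1 := by simp [hWtdef, hwtdef]
      rw [hW, mul_one, hlamdef]
      apply ENNReal.ofReal_le_ofReal
      have hsv : ∑ j, β j * (kp j / K) = (K - m' * s') / K := by
        rw [← hβkp, Finset.sum_div]
        exact Finset.sum_congr rfl fun j _ => by ring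
      rw [hsv, sub_div, div_self hK0.ne']
      linarith [hεr]
    · simp only [List.concat_eq_append]
      rw [hSconcat w i, Finset.sum_union (hdisj _ w (by simp)), Finset.sum_image (hinj _),
        Finset.sum_singleton]
      have hterm : ∀ j : Fin d, Wt ((w ++ [i]) ++ [j]) * P (w ++ [i]) ((w ++ [i]) ++ [j])
          = ENNReal.ofReal ((wt (w ++ [i]) * β j) * (kp j / (km i + K))) := by
        intro j
        simp only [hWtdef, hPdef, hp_up w i j]
        rw [hwtconcat (w ++ [i]) j,
          ← ENNReal.ofReal_mul (mul_nonneg (hwt0 _).le (hβ0 j).le)]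
      have hsing : Wt w * P (w ++ [i]) w = ENNReal.ofReal (wt w * (km i / (km i + K))) := by
        simp only [hWtdef, hPdef, hp_down w i]
        rw [← ENNReal.ofReal_mul (hwt0 w).le]
      have hnn1 : ∀ j : Fin d, 0 ≤ (wt (w ++ [i]) * β j) * (kp j / (km i + K)) := fun j =>
        mul_nonneg (mul_nonneg (hwt0 _).le (hβ0 j).le) (div_pos (hkp j) (hKi i)).le
      rw [Finset.sum_congr rfl fun j _ => hterm j, hsing,
        ← ENNReal.ofReal_sum_of_nonneg fun j _ => hnn1 j,
        ← ENNReal.ofReal_add (Finset.sum_nonneg fun j _ => hnn1 j)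
          (mul_nonneg (hwt0 w).le (div_pos (hkm i) (hKi i)).le)]
      have hWc : lam * Wt (w ++ [i]) = ENNReal.ofReal ((1 - ε) * wt (w ++ [i])) := by
        rw [hlamdef, hWtdef, ← ENNReal.ofReal_mul h1ε.le]
      rw [hWc]
      apply ENNReal.ofReal_le_ofReal
      have hsv : ∑ j, (wt (w ++ [i]) * β j) * (kp j / (km i + K))
          = wt (w ++ [i]) * (K - m' * s') / (km i + K) := by
        rw [← hβkp, Finset.mul_sum, Finset.sum_div]
        exact Finset.sum_congr rfl fun j _ => by ring
      have hkey : wt w * km i = wt (w ++ [i]) * (m' + km i) := by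
        rw [hwtconcat w i]
        linear_combination (-(wt w)) * hβm i
      have h1 : wt w * (km i / (km i + K)) = wt (w ++ [i]) * (m' + km i) / (km i + K) := by
        rw [mul_div_assoc', hkey]
      rw [hsv, h1, ← add_div, div_le_iff₀ (hKi i)]
      nlinarith [mul_le_mul_of_nonneg_left (hεi i) (hwt0 (w ++ [i])).le]
  have hLyap : ∀ n x, (∑' y, Wt y * Pn n x y) ≤ lam ^ n * Wt x := by
    intro n
    induction n with
    | zero =>
        intro x
        have h0 : ∀ y : List (Fin d), y ≠ x → Wt y * Pn 0 x y = 0 := by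
          intro y hy
          rw [hPn0, if_neg (fun h => hy h.symm), mul_zero]
        rw [tsum_eq_single x h0, hPn0, if_pos rfl, mul_one, pow_zero, one_mul]
    | succ n ih =>
        intro x
        calc (∑' y, Wt y * Pn (n+1) x y)
            = ∑' y, ∑' z, Wt y * (Pn n x z * P z y) := by
              refine tsum_congr fun y => ?_
              rw [hPn_rec n x y, ENNReal.tsum_mul_left]
          _ = ∑' z, ∑' y, Wt y * (Pn n x z * P z y) := ENNReal.tsum_comm
          _ = ∑' z, Pn n x z * ∑' y, Wt y * P z y := by
              refine tsum_congr fun z => ?_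
              rw [← ENNReal.tsum_mul_left]
              exact tsum_congr fun y => by ring
          _ ≤ ∑' z, Pn n x z * (lam * Wt z) :=
              ENNReal.tsum_le_tsum fun z => mul_le_mul_right (hout z) _
          _ = lam * ∑' z, Wt z * Pn n x z := by
              rw [← ENNReal.tsum_mul_left]
              exact tsum_congr fun z => by ring
          _ ≤ lam * (lam ^ n * Wt x) := mul_le_mul_right (ih x) lam
          _ = lam ^ (n+1) * Wt x := by ring
  have hpt : ∀ n x y, Wt y * Pn n x y ≤ lam ^ n * Wt x := by
    intro n x y; exact le_trans (ENNReal.le_tsum y) (hLyap n x)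
  -- ## Part 1 : finiteness
  have part1 : ∀ x y : List (Fin d), (∑' n : ℕ, ENNReal.ofReal (pn n x y)) < ⊤ := by
    intro x y
    have hPneq : ∀ n : ℕ, ENNReal.ofReal (pn n x y) = Pn n x y := fun n => by rw [hPndef]
    simp_rw [hPneq]
    have h1 : Wt y * ∑' n : ℕ, Pn n x y = ∑' n : ℕ, Wt y * Pn n x y :=
      ENNReal.tsum_mul_left.symm
    have h2 : (∑' n : ℕ, Wt y * Pn n x y) ≤ ∑' n : ℕ, lam ^ n * Wt x :=
      ENNReal.tsum_le_tsum fun n => hpt n x y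
    have h3 : (∑' n : ℕ, lam ^ n * Wt x) = (1 - lam)⁻¹ * Wt x := by
      rw [ENNReal.tsum_mul_right, ENNReal.tsum_geometric]
    have h4 : (1 - lam)⁻¹ * Wt x < ⊤ := by
      apply ENNReal.mul_lt_top _ (lt_top_iff_ne_top.2 (hWtt x))
      rw [lt_top_iff_ne_top]
      refine ENNReal.inv_ne_top.2 ?_
      rw [← pos_iff_ne_zero, tsub_pos_iff_lt]
      exact hlam1
    by_contra htop
    rw [not_lt, top_le_iff] at htop
    rw [htop, ENNReal.mul_top (hWt0 y)] at h1
    rw [← h1] at h2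
    exact absurd (lt_of_le_of_lt (h2.trans h3.le) h4) (by simp)
  -- ## the explicit Green function
  set g : List (Fin d) → ℝ :=
    fun y => (1/m) * (y.map σ).prod * (y.getLast?.elim K (fun i => km i + K)) with hgdef
  have hσprod0 : ∀ y : List (Fin d), 0 ≤ (y.map σ).prod :=
    fun y => listProd_nonneg σ (fun i => (hσ0 i).le) y
  have hg0 : ∀ y, 0 ≤ g y := by
    intro y
    rw [hgdef]
    refine mul_nonneg (mul_nonneg (by positivity) (hσprod0 y)) ?_
    cases h : y.getLast? with
    | none => simpa using hK0.le
    | some i => simpa using (hKi i).le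
  have hgconcat : ∀ (w : List (Fin d)) (j : Fin d),
      g (w ++ [j]) = (1/m) * (w.map σ).prod * (σ j * (km j + K)) := by
    intro w j
    rw [hgdef]
    simp only [List.map_append, List.prod_append, List.map_cons, List.map_nil,
      List.prod_cons, List.prod_nil, List.getLast?_concat, Option.elim]
    ring
  have hgp : ∀ (w : List (Fin d)) (j : Fin d),
      g w * p w (w ++ [j]) = (1/m) * (w.map σ).prod * kp j := by
    intro w j
    rcases List.eq_nil_or_concat w with rfl | ⟨v, i, rfl⟩
    · have h1 : p [] ([] ++ [j]) = kp j / K := by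
        rw [List.nil_append, hp_root j]
      rw [h1, hgdef]
      simp only [List.map_nil, List.prod_nil, List.getLast?, Option.elim]
      field_simp
    · simp only [List.concat_eq_append]
      rw [hgconcat v i, hp_up v i j]
      simp only [List.map_append, List.prod_append, List.map_cons, List.map_nil,
        List.prod_cons, List.prod_nil]
      field_simp [(hKi i).ne']
  set gE : List (Fin d) → ℝ≥0∞ := fun y => ENNReal.ofReal (g y) with hgEdef
  have hgEt : ∀ y, gE y ≠ ⊤ := fun y => ENNReal.ofReal_ne_top
  clear_value g gE
  -- harmonic identity
  have hgnn : ∀ (u : List (Fin d)) (r : Fin d), 0 ≤ 1/m * (u.map σ).prod * (σ r * km r) :=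
    fun u r => mul_nonneg (mul_nonneg (by positivity) (hσprod0 u))
      (mul_nonneg (hσ0 r).le (hkm r).le)
  have hdown : ∀ (u : List (Fin d)) (r : Fin d),
      gE (u ++ [r]) * P (u ++ [r]) u = ENNReal.ofReal (1/m * (u.map σ).prod * (σ r * km r)) := by
    intro u r
    simp only [hgEdef, hPdef, hp_down u r, hgconcat u r]
    rw [← ENNReal.ofReal_mul (mul_nonneg (mul_nonneg (by positivity) (hσprod0 u))
      (mul_nonneg (hσ0 r).le (hKi r).le))]
    congr 1
    field_simp [(hKi r).ne', hm.ne']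
  have hharm : ∀ y, (∑' w, gE w * P w y) + (if y = [] then (1:ℝ≥0∞) else 0) = gE y := by
    intro y
    have hvan : ∀ z ∉ S y, gE z * P z y = 0 := fun z hz => by
      simp [hPdef, hpS z y hz]
    rw [tsum_eq_sum hvan]
    rcases List.eq_nil_or_concat y with rfl | ⟨w, j, rfl⟩
    · rw [hSnil, Finset.sum_image (hinj []), if_pos rfl]
      have hterm : ∀ r : Fin d, gE ([] ++ [r]) * P ([] ++ [r]) []
          = ENNReal.ofReal (1/m * (σ r * km r)) := by
        intro r
        have := hdown [] r
        simpa using this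
      rw [Finset.sum_congr rfl fun r _ => hterm r,
        ← ENNReal.ofReal_sum_of_nonneg fun r _ =>
          mul_nonneg (by positivity) (mul_nonneg (hσ0 r).le (hkm r).le),
        ← ENNReal.ofReal_one,
        ← ENNReal.ofReal_add (Finset.sum_nonneg fun r _ =>
          mul_nonneg (by positivity) (mul_nonneg (hσ0 r).le (hkm r).le)) zero_le_one]
      rw [hgEdef]
      congr 1
      have h1 : ∑ r, 1/m * (σ r * km r) = 1/m * (K - m) := by
        rw [← Finset.mul_sum, hσkm]
      rw [h1, hgdef]
      simp only [List.map_nil, List.prod_nil, List.getLast?, Option.elim]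
      field_simp
      ring
    · simp only [List.concat_eq_append]
      rw [hSconcat w j, Finset.sum_union (hdisj _ w (by simp)), Finset.sum_image (hinj _),
        Finset.sum_singleton, if_neg (by simp), add_zero]
      rw [Finset.sum_congr rfl fun r _ => hdown (w ++ [j]) r,
        ← ENNReal.ofReal_sum_of_nonneg fun r _ => hgnn (w ++ [j]) r]
      have hsing : gE w * P w (w ++ [j]) = ENNReal.ofReal (1/m * (w.map σ).prod * kp j) := by
        simp only [hgEdef, hPdef]
        rw [← ENNReal.ofReal_mul (hg0 w), hgp w j]
      rw [hsing, ← ENNReal.ofReal_add (Finset.sum_nonneg fun r _ => hgnn (w ++ [j]) r)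
        (mul_nonneg (mul_nonneg (by positivity) (hσprod0 w)) (hkp j).le)]
      rw [hgEdef]
      congr 1
      have h1 : ∑ r, 1/m * ((w ++ [j]).map σ).prod * (σ r * km r)
          = 1/m * ((w ++ [j]).map σ).prod * (K - m) := by
        rw [← Finset.mul_sum, hσkm]
      rw [h1, hgconcat w j]
      simp only [List.map_append, List.prod_append, List.map_cons, List.map_nil,
        List.prod_cons, List.prod_nil, mul_one]
      linear_combination (-(1/m) * (w.map σ).prod) * hσm j
  
  -- ## approach sequences
  set A : ℕ → List (Fin d) → ℝ≥0∞ := fun N y => ∑' z, gE z * Pn N z y with hAdef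
  set T : ℕ → List (Fin d) → ℝ≥0∞ :=
    fun N y => ∑ n ∈ Finset.range N, Pn n [] y with hTdef
  have hA0 : ∀ y, A 0 y = gE y := by
    intro y
    simp only [hAdef]
    rw [tsum_eq_single y (fun z hz => by rw [hPn0, if_neg hz, mul_zero]),
      hPn0, if_pos rfl, mul_one]
  have hArec : ∀ N y, A (N+1) y = ∑' w, A N w * P w y := by
    intro N y
    simp only [hAdef]
    calc (∑' z, gE z * Pn (N+1) z y)
        = ∑' z, ∑' w, gE z * (Pn N z w * P w y) := by
          refine tsum_congr fun z => ?_
          rw [hPn_rec N z y, ENNReal.tsum_mul_left]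
      _ = ∑' w, ∑' z, gE z * (Pn N z w * P w y) := ENNReal.tsum_comm
      _ = ∑' w, (∑' z, gE z * Pn N z w) * P w y := by
          refine tsum_congr fun w => ?_
          calc (∑' z, gE z * (Pn N z w * P w y))
              = ∑' z, (gE z * Pn N z w) * P w y :=
                tsum_congr fun z => (mul_assoc _ _ _).symm
            _ = (∑' z, gE z * Pn N z w) * P w y := ENNReal.tsum_mul_right
  have hAT : ∀ N y, A N y + T N y = gE y := by
    intro N
    induction N with
    | zero =>
        intro y
        rw [hA0 y]
        simp [hTdef]
    | succ N ih =>
        intro y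
        have hTs : T (N+1) y
            = (if y = [] then (1:ℝ≥0∞) else 0) + ∑ n ∈ Finset.range N, Pn (n+1) [] y := by
          simp only [hTdef]
          rw [Finset.sum_range_succ', hPn0, add_comm]
          congr 1
          by_cases hy : y = []
          · rw [if_pos hy, if_pos hy.symm]
          · rw [if_neg hy, if_neg (fun h => hy h.symm)]
        have hswap : (∑' w, T N w * P w y) = ∑ n ∈ Finset.range N, Pn (n+1) [] y := by
          simp only [hTdef]
          calc (∑' w, (∑ n ∈ Finset.range N, Pn n [] w) * P w y)
              = ∑' w, ∑ n ∈ Finset.range N, Pn n [] w * P w y :=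
                tsum_congr fun w => Finset.sum_mul _ _ _
            _ = ∑ n ∈ Finset.range N, ∑' w, Pn n [] w * P w y :=
                Summable.tsum_finsetSum fun i _ => ENNReal.summable
            _ = ∑ n ∈ Finset.range N, Pn (n+1) [] y :=
                Finset.sum_congr rfl fun n _ => (hPn_rec n [] y).symm
        calc A (N+1) y + T (N+1) y
            = (∑' w, A N w * P w y)
              + ((if y = [] then (1:ℝ≥0∞) else 0) + ∑ n ∈ Finset.range N, Pn (n+1) [] y) := by
              rw [hArec, hTs]
          _ = ((∑' w, A N w * P w y) + (∑' w, T N w * P w y))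
              + (if y = [] then (1:ℝ≥0∞) else 0) := by
              rw [hswap]; ring
          _ = (∑' w, (A N w + T N w) * P w y) + (if y = [] then (1:ℝ≥0∞) else 0) := by
              rw [← ENNReal.tsum_add]
              congr 1
              exact tsum_congr fun w => (add_mul _ _ _).symm
          _ = (∑' w, gE w * P w y) + (if y = [] then (1:ℝ≥0∞) else 0) := by
              congr 1
              exact tsum_congr fun w => by rw [ih w]
          _ = gE y := hharm y
  -- ## the total mass bound
  have hCfin : (∑' z, gE z * Wt z) < ⊤ := by
    have hB0 : 0 ≤ B := by
      have := hkmB ⟨0, hd⟩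
      have := hkm (⟨0, hd⟩ : Fin d)
      linarith
    have hσβ0 : ∀ i : Fin d, 0 ≤ σ i * β i := fun i => mul_nonneg (hσ0 i).le (hβ0 i).le
    have hE : ∀ z : List (Fin d), z.getLast?.elim K (fun i => km i + K) ≤ K + B := by
      intro z
      cases h : z.getLast? with
      | none => simpa using (by linarith : K ≤ K + B)
      | some i => simpa using (by linarith [hkmB i] : km i + K ≤ K + B)
    have hbound : ∀ z : List (Fin d), gE z * Wt z
        ≤ ENNReal.ofReal ((K + B)/m) * (z.map fun i => ENNReal.ofReal (σ i * β i)).prod := by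
      intro z
      have h1 : gE z * Wt z = ENNReal.ofReal (g z * wt z) := by
        rw [hgEdef, hWtdef, ← ENNReal.ofReal_mul (hg0 z)]
      have h2 : g z * wt z ≤ (K + B)/m * ((z.map fun i => σ i * β i).prod) := by
        have h3 : g z * wt z = (1/m) * ((z.map fun i => σ i * β i).prod)
            * (z.getLast?.elim K fun i => km i + K) := by
          simp only [hgdef, hwtdef]
          rw [listProd_mul σ β z]
          ring
        rw [h3]
        have h4 : 0 ≤ (1/m) * ((z.map fun i => σ i * β i).prod) :=
          mul_nonneg (by positivity) (listProd_nonneg _ hσβ0 z)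
        calc (1/m) * ((z.map fun i => σ i * β i).prod) * (z.getLast?.elim K fun i => km i + K)
            ≤ (1/m) * ((z.map fun i => σ i * β i).prod) * (K + B) :=
              mul_le_mul_of_nonneg_left (hE z) h4
          _ = (K + B)/m * ((z.map fun i => σ i * β i).prod) := by ring
      calc gE z * Wt z = ENNReal.ofReal (g z * wt z) := h1
        _ ≤ ENNReal.ofReal ((K + B)/m * ((z.map fun i => σ i * β i).prod)) :=
            ENNReal.ofReal_le_ofReal h2
        _ = ENNReal.ofReal ((K + B)/m) * (z.map fun i => ENNReal.ofReal (σ i * β i)).prod := by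
            rw [ENNReal.ofReal_mul (by positivity), ofReal_listProd _ hσβ0 z]
    have hr1 : (∑ i : Fin d, ENNReal.ofReal (σ i * β i)) < 1 := by
      rw [← ENNReal.ofReal_sum_of_nonneg fun i _ => hσβ0 i]
      refine ENNReal.ofReal_lt_one.2 ?_
      have hlt : ∑ i, σ i * β i < ∑ i, σ i :=
        Finset.sum_lt_sum_of_nonempty Finset.univ_nonempty fun i _ => by
          nlinarith [mul_pos (hσ0 i) (sub_pos.mpr (hβ1 i))]
      exact hσsum ▸ hlt
    calc (∑' z, gE z * Wt z)
        ≤ ∑' z : List (Fin d), ENNReal.ofReal ((K + B)/m)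
            * (z.map fun i => ENNReal.ofReal (σ i * β i)).prod :=
          ENNReal.tsum_le_tsum hbound
      _ = ENNReal.ofReal ((K + B)/m)
            * ∑' z : List (Fin d), (z.map fun i => ENNReal.ofReal (σ i * β i)).prod :=
          ENNReal.tsum_mul_left
      _ = ENNReal.ofReal ((K + B)/m)
            * ∑' n : ℕ, (∑ i : Fin d, ENNReal.ofReal (σ i * β i)) ^ n := by
          rw [tsum_list_prod]
      _ = ENNReal.ofReal ((K + B)/m) * (1 - ∑ i : Fin d, ENNReal.ofReal (σ i * β i))⁻¹ := by
          rw [ENNReal.tsum_geometric]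
      _ < ⊤ := by
          apply ENNReal.mul_lt_top ENNReal.ofReal_lt_top
          rw [lt_top_iff_ne_top]
          refine ENNReal.inv_ne_top.2 ?_
          rw [← pos_iff_ne_zero, tsub_pos_iff_lt]
          exact hr1
  set C : ℝ≥0∞ := ∑' z, gE z * Wt z with hCdef
  have hAbound : ∀ N y, A N y ≤ lam ^ N * ((Wt y)⁻¹ * C) := by
    intro N y
    have hP2 : ∀ z, Pn N z y ≤ (Wt y)⁻¹ * (lam ^ N * Wt z) := by
      intro z
      calc Pn N z y = (Wt y)⁻¹ * (Wt y * Pn N z y) := by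
            rw [← mul_assoc, ENNReal.inv_mul_cancel (hWt0 y) (hWtt y), one_mul]
        _ ≤ (Wt y)⁻¹ * (lam ^ N * Wt z) := mul_le_mul_right (hpt N z y) _
    calc A N y = ∑' z, gE z * Pn N z y := by simp only [hAdef]
      _ ≤ ∑' z, gE z * ((Wt y)⁻¹ * (lam ^ N * Wt z)) :=
          ENNReal.tsum_le_tsum fun z => mul_le_mul_right (hP2 z) _
      _ = lam ^ N * ((Wt y)⁻¹ * ∑' z, gE z * Wt z) := by
          rw [← ENNReal.tsum_mul_left, ← ENNReal.tsum_mul_left]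
          exact tsum_congr fun z => by ring
      _ = lam ^ N * ((Wt y)⁻¹ * C) := by rw [hCdef]
  have hcne : ∀ y, (Wt y)⁻¹ * C ≠ ⊤ := fun y =>
    ENNReal.mul_ne_top (ENNReal.inv_ne_top.2 (hWt0 y)) hCfin.ne
  have hpowtend : ∀ y, Tendsto (fun N => lam ^ N * ((Wt y)⁻¹ * C)) atTop (nhds 0) := by
    intro y
    have h1 := ENNReal.tendsto_pow_atTop_nhds_zero_of_lt_one hlam1
    have h2 := ENNReal.Tendsto.mul_const h1 (Or.inr (hcne y))
    simpa using h2
  have htendA : ∀ y, Tendsto (fun N => A N y) atTop (nhds 0) := by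
    intro y
    exact tendsto_of_tendsto_of_tendsto_of_le_of_le tendsto_const_nhds (hpowtend y)
      (fun N => zero_le) (fun N => hAbound N y)
  -- ## Green function value
  have hGg : ∀ y, (∑' n : ℕ, Pn n [] y) = gE y := by
    intro y
    apply le_antisymm
    · rw [ENNReal.tsum_eq_iSup_nat]
      apply iSup_le
      intro N
      calc (∑ n ∈ Finset.range N, Pn n [] y) = T N y := by simp only [hTdef]
        _ ≤ A N y + T N y := le_add_self
        _ = gE y := hAT N y
    · have hle : ∀ N : ℕ, gE y ≤ (∑' n : ℕ, Pn n [] y) + lam ^ N * ((Wt y)⁻¹ * C) := by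
        intro N
        calc gE y = A N y + T N y := (hAT N y).symm
          _ ≤ lam ^ N * ((Wt y)⁻¹ * C) + (∑' n : ℕ, Pn n [] y) := by
              refine add_le_add (hAbound N y) ?_
              simp only [hTdef]
              exact Summable.sum_le_tsum (Finset.range N) (fun _ _ => zero_le) ENNReal.summable
          _ = (∑' n : ℕ, Pn n [] y) + lam ^ N * ((Wt y)⁻¹ * C) := add_comm _ _
      have htend2 : Tendsto (fun N : ℕ => (∑' n : ℕ, Pn n [] y) + lam ^ N * ((Wt y)⁻¹ * C))
          atTop (nhds ((∑' n : ℕ, Pn n [] y) + 0)) :=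
        Tendsto.const_add _ (hpowtend y)
      have := ge_of_tendsto' htend2 hle
      simpa using this
  constructor
  · exact part1
  · intro x i j
    have hPneq : ∀ (n : ℕ) (y : List (Fin d)), ENNReal.ofReal (pn n [] y) = Pn n [] y :=
      fun n y => by rw [hPndef]
    have h1 : (∑' n : ℕ, ENNReal.ofReal (pn n [] (x ++ [j]))) = gE (x ++ [j]) := by
      rw [tsum_congr fun n => hPneq n (x ++ [j])]; exact hGg (x ++ [j])
    have h2 : (∑' n : ℕ, ENNReal.ofReal (pn n [] (x ++ [i]))) = gE (x ++ [i]) := by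
      rw [tsum_congr fun n => hPneq n (x ++ [i])]; exact hGg (x ++ [i])
    rw [h1, h2, hgEdef]
    simp only [hgconcat]
    have hnn : ∀ r : Fin d, 0 ≤ (1/m) * (x.map σ).prod * (σ r * (km r + K)) := fun r =>
      mul_nonneg (mul_nonneg (by positivity) (hσprod0 x))
        (mul_nonneg (hσ0 r).le (hKi r).le)
    rw [← ENNReal.ofReal_mul (hnn j), ← ENNReal.ofReal_mul (hnn i)]
    congr 1
    ring
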